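/- Let R be a separable k-algebra with separability idempotent ζ(1) = Σ_l e_l ⊗ f_l ∈ R ⊗_k R. For any k-algebra B and B-R bimodules M, N, the map Φ sending a left B-linear map f : M → N to Φ(f) : m ↦ Σ_l f(m e_l) f_l is a B-R bilinear map, and Φ(f) = f whenever f is already B-R bilinear. Hence the forgetful functor from B-R bimodules to left B-modules is separable. -/

import Mathlib

/-!
STATEMENT 10: Let `R` be a separable `k`-algebra with separability idempotent
`Σ_l e_l ⊗ f_l ∈ R ⊗_k R`.  For any `k`-algebra `B` and `B`-`R` bimodules
`M`, `N`, the map `Φ` sending a left `B`-linear map `f : M → N` to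
`Φ(f) : m ↦ Σ_l f(m e_l) f_l` is `B`-`R` bilinear, and `Φ(f) = f` whenever `f`
is already `B`-`R` bilinear.  (Hence the forgetful functor from `B`-`R`
bimodules to left `B`-modules is separable.)
-/

open MulOpposite

theorem separable_algebra_retraction
    {k R : Type*} [CommRing k] [Ring R] [Algebra k R]
    -- separability idempotent of R over k
    {L : Type*} [Fintype L] (e f : L → R)
    (hsep1 : ∀ r : R,
      ∑ l, (r * e l) ⊗ₜ[k] (f l) = ∑ l, (e l) ⊗ₜ[k] (f l * r))
    (hsep2 : ∑ l, e l * f l = 1)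
    -- B is any k-algebra; M, N are B-R bimodules
    {B : Type*} [Ring B] [Algebra k B]
    {M : Type*} [AddCommGroup M] [Module k M] [Module B M] [Module Rᵐᵒᵖ M]
    [IsScalarTower k B M] [IsScalarTower k Rᵐᵒᵖ M] [SMulCommClass B Rᵐᵒᵖ M]
    {N : Type*} [AddCommGroup N] [Module k N] [Module B N] [Module Rᵐᵒᵖ N]
    [IsScalarTower k B N] [IsScalarTower k Rᵐᵒᵖ N] [SMulCommClass B Rᵐᵒᵖ N]
    -- g is a left B-linear map M → N
    (g : M →ₗ[B] N) :
    -- Φ(g) : m ↦ Σ_l g(m·e_l)·f_l is left B-linear …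
    (∀ (b : B) (m : M),
      (∑ l, op (f l) • g (op (e l) • (b • m)))
        = b • ∑ l, op (f l) • g (op (e l) • m))
    -- … and right R-linear, i.e. Φ(g) is a B-R bimodule map …
    ∧ (∀ (r : R) (m : M),
      (∑ l, op (f l) • g (op (e l) • (op r • m)))
        = op r • ∑ l, op (f l) • g (op (e l) • m))
    -- … and Φ(g) = g whenever g is already right R-linear:
    ∧ ((∀ (r : R) (m : M), g (op r • m) = op r • g m) →
      ∀ m : M, (∑ l, op (f l) • g (op (e l) • m)) = g m) := by

  have hk : ∀ (c : k) (x : M), g (c • x) = c • g x := fun c x =>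
    g.map_smul_of_tower c x
  refine ⟨?_, ?_, ?_⟩
  · intro b m
    rw [Finset.smul_sum]
    refine Finset.sum_congr rfl fun l _ => ?_
    rw [← smul_comm b (op (e l)) m, map_smul, ← smul_comm b (op (f l))]
  · intro r m
    -- bilinear map R ⊗ R → N, x ⊗ y ↦ op y • g (op x • m)
    let φ : R →ₗ[k] R →ₗ[k] N := LinearMap.mk₂ k
      (fun x y => op y • g (op x • m))
      (fun x₁ x₂ y => by rw [op_add, add_smul, map_add, smul_add])
      (fun c x y => by rw [op_smul, smul_assoc, hk, ← smul_comm c (op y)])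
      (fun x y₁ y₂ => by rw [op_add, add_smul])
      (fun c x y => by rw [op_smul, smul_assoc])
    have h := congrArg (TensorProduct.lift φ) (hsep1 r)
    simp only [map_sum, TensorProduct.lift.tmul, LinearMap.mk₂_apply, φ] at h
    calc ∑ l, op (f l) • g (op (e l) • op r • m)
        = ∑ l, op (f l) • g (op (r * e l) • m) := by
          refine Finset.sum_congr rfl fun l _ => ?_
          rw [smul_smul, ← op_mul]
      _ = ∑ l, op (f l * r) • g (op (e l) • m) := h
      _ = op r • ∑ l, op (f l) • g (op (e l) • m) := by
          rw [Finset.smul_sum]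
          refine Finset.sum_congr rfl fun l _ => ?_
          rw [op_mul, mul_smul]
  · intro hg m
    calc ∑ l, op (f l) • g (op (e l) • m)
        = ∑ l, op (e l * f l) • g m := by
          refine Finset.sum_congr rfl fun l _ => ?_
          rw [hg, smul_smul, ← op_mul]
      _ = g m := by
          rw [← Finset.sum_smul]
          have : ∑ l, op (e l * f l) = op (∑ l, e l * f l) := by
            simp [Finset.op_sum]
          rw [this, hsep2, op_one, one_smul]
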